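/- Let f : ℝ → ℝ be continuous, even, and satisfy f(p) ≥ 1 for all p ∈ ℝ, and set k_max := ∫₀^∞ dp / f(p) ∈ (0, ∞]. Then the function g(p) := ∫₀^p dq / f(q) is a strictly increasing bijection from ℝ onto the open interval (−k_max, k_max), and its inverse function p : (−k_max, k_max) → ℝ is differentiable and satisfies the ordinary differential equation p'(k) = f(p(k)) for all k ∈ (−k_max, k_max), together with p(0) = 0. -/

import Mathlib

open MeasureTheory Set
open scoped ENNReal

/-- For a continuous, even modification `f ≥ 1`, the function
`g(p) = ∫₀^p dq / f(q)` is a strictly increasing bijection from `ℝ` onto the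
interval `(−k_max, k_max)` (with `k_max = ∫₀^∞ dp / f(p) ∈ (0,∞]`), and its
inverse `p` satisfies `p' = f ∘ p` with `p 0 = 0`. -/
theorem modified_momentum_construction
    (f : ℝ → ℝ) (hf_cont : Continuous f)
    (hf_even : ∀ p : ℝ, f (-p) = f p) (hf_ge : ∀ p : ℝ, 1 ≤ f p)
    (kmax : ℝ≥0∞)
    (hkmax : kmax = ∫⁻ p in Set.Ioi (0 : ℝ), ENNReal.ofReal (1 / f p))
    (I : Set ℝ) (hI : I = {k : ℝ | ENNReal.ofReal |k| < kmax})
    (g : ℝ → ℝ) (hg : ∀ p : ℝ, g p = ∫ q in (0 : ℝ)..p, 1 / f q) :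
    0 < kmax ∧ StrictMono g ∧ Set.BijOn g Set.univ I ∧
      ∃ p : ℝ → ℝ, (∀ x : ℝ, p (g x) = x) ∧ (∀ k ∈ I, g (p k) = k) ∧
        p 0 = 0 ∧ ∀ k ∈ I, HasDerivAt p (f (p k)) k := by
  have hfpos : ∀ x, (0:ℝ) < f x := fun x => lt_of_lt_of_le one_pos (hf_ge x)
  have hone : Continuous fun q : ℝ => 1 / f q :=
    continuous_const.div hf_cont fun x => (hfpos x).ne'
  have honepos : ∀ x, (0:ℝ) < 1 / f x := fun x => div_pos one_pos (hfpos x)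
  set h : ℝ → ℝ≥0∞ := fun q => ENNReal.ofReal (1 / f q) with hh
  have hmeas : Measurable h := (ENNReal.continuous_ofReal.comp hone).measurable
  -- derivative of g
  have hgderiv : ∀ b : ℝ, HasDerivAt g (1 / f b) b := by
    intro b
    have := (hone.integral_hasStrictDerivAt 0 b).hasDerivAt
    have hgeq : g = fun u => ∫ q in (0:ℝ)..u, 1 / f q := funext hg
    rw [hgeq]
    exact this
  have hgcont : Continuous g := by
    have : Differentiable ℝ g := fun x => (hgderiv x).differentiableAt
    exact this.continuous
  have hmono : StrictMono g := by
    apply strictMono_of_deriv_pos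
    intro x
    rw [(hgderiv x).deriv]
    exact honepos x
  have hg0 : g 0 = 0 := by rw [hg]; simp
  -- oddness
  have hodd : ∀ x : ℝ, g (-x) = - g x := by
    intro x
    have h1 : (∫ q in (0:ℝ)..x, (fun q => 1 / f q) (-q)) = ∫ q in (-x)..(0:ℝ), 1 / f q := by
      simpa using intervalIntegral.integral_comp_neg (a := (0:ℝ)) (b := x)
        (f := fun q => 1 / f q)
    have h2 : (∫ q in (0:ℝ)..x, (fun q => 1 / f q) (-q)) = ∫ q in (0:ℝ)..x, 1 / f q := by
      apply intervalIntegral.integral_congr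
      intro q _
      simp [hf_even q]
    rw [hg, hg x, ← h2, h1, intervalIntegral.integral_symm]
  -- key: for 0 ≤ x, ofReal (g x) = ∫⁻ over Ioc 0 x
  have hkey : ∀ x : ℝ, 0 ≤ x → ENNReal.ofReal (g x) = ∫⁻ q in Set.Ioc (0:ℝ) x, h q := by
    intro x hx
    rw [hg, intervalIntegral.integral_of_le hx]
    exact ofReal_integral_eq_lintegral_ofReal
      (hone.integrableOn_Ioc) (Filter.Eventually.of_forall fun q => (honepos q).le)
  -- positivity of tail integrals
  have htail : ∀ x : ℝ, 0 < ∫⁻ q in Set.Ioi x, h q := by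
    intro x
    rw [lintegral_pos_iff_support hmeas]
    have hsupp : Function.support h = Set.univ := by
      ext q
      simp [hh, Function.mem_support, ENNReal.ofReal_pos, honepos q, hfpos q]
    rw [hsupp, Measure.restrict_apply_univ]
    simp [Real.volume_Ioi]
  have hkpos : 0 < kmax := by
    rw [hkmax]
    exact htail 0
  -- finiteness of initial segments
  have hfin : ∀ x : ℝ, (∫⁻ q in Set.Ioc (0:ℝ) x, h q) ≠ ⊤ := by
    intro x
    rcases le_or_gt 0 x with hx | hx
    · rw [← hkey x hx]; exact ENNReal.ofReal_ne_top
    · rw [Set.Ioc_eq_empty (by linarith)]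
      simp
  -- splitting
  have hsplit : ∀ x : ℝ, 0 ≤ x →
      (∫⁻ q in Set.Ioc (0:ℝ) x, h q) + (∫⁻ q in Set.Ioi x, h q) = kmax := by
    intro x hx
    rw [hkmax, ← lintegral_union measurableSet_Ioi (Set.Ioc_disjoint_Ioi le_rfl),
      Set.Ioc_union_Ioi_eq_Ioi hx]
  -- maps into I
  have hmem : ∀ x : ℝ, g x ∈ I := by
    intro x
    have habs : |g x| = g |x| := by
      rcases le_or_gt 0 x with hx | hx
      · rw [abs_of_nonneg hx, abs_of_nonneg (by rw [← hg0]; exact hmono.le_iff_le.2 hx)]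
      · have hgx : g x < 0 := by rw [← hg0]; exact hmono hx
        rw [abs_of_neg hgx, abs_of_neg hx, hodd x]
    rw [hI]
    show ENNReal.ofReal |g x| < kmax
    rw [habs, hkey |x| (abs_nonneg x), ← hsplit |x| (abs_nonneg x)]
    exact ENNReal.lt_add_right (hfin |x|) (htail |x|).ne'
  -- kmax as a supremum
  have hsup : kmax = ⨆ n : ℕ, ∫⁻ q in Set.Ioc (0:ℝ) (n:ℝ), h q := by
    have hind : ∀ q : ℝ, (Set.Ioi (0:ℝ)).indicator h q
        = ⨆ n : ℕ, (Set.Ioc (0:ℝ) (n:ℝ)).indicator h q := by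
      intro q
      rcases le_or_gt q 0 with hq | hq
      · rw [Set.indicator_of_notMem (by simpa using hq)]
        symm
        simp only [ENNReal.iSup_eq_zero]
        intro n
        exact Set.indicator_of_notMem (fun hmem => absurd hmem.1 (not_lt.2 hq)) h
      · rw [Set.indicator_of_mem (Set.mem_Ioi.2 hq)]
        apply le_antisymm
        · obtain ⟨n, hn⟩ := exists_nat_ge q
          exact le_iSup_of_le n (le_of_eq (Set.indicator_of_mem (Set.mem_Ioc.mpr ⟨hq, hn⟩) h).symm)
        · exact iSup_le fun n => Set.indicator_le_self _ _ q
      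
    rw [hkmax, ← lintegral_indicator measurableSet_Ioi h]
    have : ∀ n : ℕ, (∫⁻ q in Set.Ioc (0:ℝ) (n:ℝ), h q)
        = ∫⁻ q, (Set.Ioc (0:ℝ) (n:ℝ)).indicator h q := fun n =>
      (lintegral_indicator measurableSet_Ioc h).symm
    simp only [this]
    rw [← lintegral_iSup (fun n => hmeas.indicator measurableSet_Ioc)
      (fun n m hnm => Set.indicator_le_indicator_of_subset
        (Set.Ioc_subset_Ioc le_rfl (Nat.cast_le.2 hnm)) (fun q => zero_le))]
    exact lintegral_congr fun q => (hind q)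
  -- surjectivity for nonneg k
  have hsurj0 : ∀ k : ℝ, 0 ≤ k → k ∈ I → ∃ x, g x = k := by
    intro k hk hkI
    rw [hI] at hkI
    have hkI' : ENNReal.ofReal |k| < kmax := hkI
    rw [abs_of_nonneg hk, hsup] at hkI'
    obtain ⟨n, hn⟩ := lt_iSup_iff.1 hkI'
    have hkn : k < g n := by
      have h0n : (0:ℝ) ≤ (n:ℝ) := Nat.cast_nonneg n
      rw [← hkey _ h0n] at hn
      exact (ENNReal.ofReal_lt_ofReal_iff_of_nonneg hk).1 hn
    have h0n : (0:ℝ) ≤ (n:ℝ) := Nat.cast_nonneg n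
    obtain ⟨x, _, hx⟩ := intermediate_value_Icc h0n hgcont.continuousOn
      ⟨by rw [hg0]; exact hk, hkn.le⟩
    exact ⟨x, hx⟩
  -- surjectivity in general
  have hsurj : ∀ k ∈ I, ∃ x, g x = k := by
    intro k hkI
    rcases le_or_gt 0 k with hk | hk
    · exact hsurj0 k hk hkI
    · have hnegI : -k ∈ I := by
        rw [hI] at hkI ⊢
        simpa [abs_neg] using hkI
      obtain ⟨x, hx⟩ := hsurj0 (-k) (by linarith) hnegI
      exact ⟨-x, by rw [hodd, hx, neg_neg]⟩
  have hbij : Set.BijOn g Set.univ I := by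
    refine ⟨fun x _ => hmem x, fun x _ y _ hxy => hmono.injective hxy, ?_⟩
    intro k hkI
    obtain ⟨x, hx⟩ := hsurj k hkI
    exact ⟨x, Set.mem_univ x, hx⟩
  -- inverse function
  set p : ℝ → ℝ := Function.invFun g with hp
  have hleft : ∀ x : ℝ, p (g x) = x := fun x =>
    Function.leftInverse_invFun hmono.injective x
  have hright : ∀ k ∈ I, g (p k) = k := by
    intro k hkI
    obtain ⟨x, hx⟩ := hsurj k hkI
    rw [← hx, hleft]
  have hp0 : p 0 = 0 := by have := hleft 0; rwa [hg0] at this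
  -- openness of I
  have hIopen : IsOpen I := by
    rw [hI]
    exact isOpen_Iio.preimage (ENNReal.continuous_ofReal.comp continuous_abs)
  -- continuity of p on I
  have hpcont : ∀ k ∈ I, ContinuousAt p k := by
    intro k hkI
    rw [Metric.continuousAt_iff]
    intro ε hε
    set x := p k with hx
    have hgx : g x = k := hright k hkI
    have hU : (Set.Ioo (g (x - ε)) (g (x + ε)) ∩ I) ∈ nhds k := by
      apply Filter.inter_mem
      · apply Ioo_mem_nhds <;> rw [← hgx] <;> exact hmono (by linarith)
      · exact hIopen.mem_nhds hkI
    obtain ⟨δ, hδ, hball⟩ := Metric.mem_nhds_iff.1 hU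
    refine ⟨δ, hδ, fun {y} hy => ?_⟩
    obtain ⟨⟨hy1, hy2⟩, hyI⟩ := hball hy
    obtain ⟨z, hz⟩ := hsurj y hyI
    have hpz : p y = z := by rw [← hz, hleft]
    have hz1 : x - ε < z := by
      by_contra hcon
      exact absurd (hz ▸ hmono.le_iff_le.2 (not_lt.1 hcon)) (not_le.2 hy1)
    have hz2 : z < x + ε := by
      by_contra hcon
      exact absurd (hz ▸ hmono.le_iff_le.2 (not_lt.1 hcon)) (not_le.2 hy2)
    rw [Real.dist_eq, hpz]
    rw [abs_lt]
    constructor <;> linarith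
  -- derivative
  refine ⟨hkpos, hmono, hbij, p, hleft, hright, hp0, ?_⟩
  intro k hkI
  have hderiv : HasDerivAt p (1 / f (p k))⁻¹ k := by
    apply HasDerivAt.of_local_left_inverse (hpcont k hkI) (hgderiv (p k))
      (ne_of_gt (honepos (p k)))
    filter_upwards [hIopen.mem_nhds hkI] with y hy
    exact hright y hy
  simpa [one_div] using hderiv
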